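/- The doubled clique DG_n on n vertices is a pure Nash equilibrium of the adversarial network creation game whenever the edge price α satisfies α ≤ 1/(n(n-1)-1). -/

import Mathlib

open scoped BigOperators ENNReal

/-- A walk of length `n` between two vertices under step relation `r`. -/
def walkLen {V : Type*} (r : V → V → Prop) : ℕ → V → V → Prop
  | 0, u, v => u = v
  | (n+1), u, v => ∃ w, r u w ∧ walkLen r n w v

/-- Adjacency in a multigraph given by a multiset of (undirected) edges. -/
def mAdj {V : Type*} (m : Multiset (Sym2 V)) (u v : V) : Prop := s(u, v) ∈ m

/-- Hop-count distance (possibly infinite) in a multigraph. -/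
noncomputable def medist {V : Type*} (m : Multiset (Sym2 V)) (u v : V) : ℕ∞ :=
  sInf ((fun n : ℕ => (n : ℕ∞)) '' {n | walkLen (mAdj m) n u v})

/-- Expected distance cost (in `ℝ≥0∞`) of vertex `u` in a multigraph under uniform random
deletion of one edge (if there are no edges, the plain distance cost). -/
noncomputable def evCost {V : Type*} [DecidableEq V] [Fintype V]
    (m : Multiset (Sym2 V)) (u : V) : ℝ≥0∞ :=
  if Multiset.card m = 0 then ∑ v : V, ((medist m u v : ℕ∞) : ℝ≥0∞)
  else (Multiset.card m : ℝ≥0∞)⁻¹ *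
    (m.map (fun e => ∑ v : V, ((medist (m.erase e) u v : ℕ∞) : ℝ≥0∞))).sum

/-- The multigraph built from a strategy profile of the network creation game. -/
def edgeMS {n : ℕ} (s : Fin n → Multiset (Fin n)) : Multiset (Sym2 (Fin n)) :=
  ∑ u : Fin n, (s u).map (fun v => s(u, v))

/-- Cost of agent `u`: `α` per owned edge plus expected distance cost. -/
noncomputable def agentCost {n : ℕ} (α : ℝ≥0∞) (s : Fin n → Multiset (Fin n)) (u : Fin n) :
    ℝ≥0∞ :=
  α * (Multiset.card (s u) : ℝ≥0∞) + evCost (edgeMS s) u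

/-- Pure Nash equilibrium: no agent can strictly decrease its cost by a unilateral change
of the multiset of edges it owns (an agent may not buy edges to itself). -/
def IsNE {n : ℕ} (α : ℝ≥0∞) (s : Fin n → Multiset (Fin n)) : Prop :=
  ∀ u : Fin n, ∀ t : Multiset (Fin n), u ∉ t →
    agentCost α s u ≤ agentCost α (Function.update s u t) u

/-! ### Auxiliary lemmas -/

section Medist

variable {V : Type*}

lemma medist_self (m : Multiset (Sym2 V)) (u : V) : medist m u u = 0 := by
  apply le_antisymm _ zero_le
  apply sInf_le
  exact ⟨0, by simp [walkLen]⟩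

lemma one_le_medist {m : Multiset (Sym2 V)} {u v : V} (h : u ≠ v) :
    1 ≤ medist m u v := by
  apply le_sInf
  rintro x ⟨k, hk, rfl⟩
  cases k with
  | zero => exact absurd hk h
  | succ k => exact Nat.one_le_cast.mpr (by omega)

lemma medist_le_one {m : Multiset (Sym2 V)} {u v : V} (h : s(u,v) ∈ m) :
    medist m u v ≤ 1 := by
  apply sInf_le
  exact ⟨1, ⟨v, h, rfl⟩, rfl⟩

lemma two_le_medist {m : Multiset (Sym2 V)} {u v : V} (h : u ≠ v)
    (h2 : s(u,v) ∉ m) : 2 ≤ medist m u v := by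
  apply le_sInf
  rintro x ⟨k, hk, rfl⟩
  match k, hk with
  | 0, hk => exact absurd hk h
  | 1, hk => obtain ⟨w, hw, rfl⟩ := hk; exact absurd hw h2
  | (k+2), hk =>
    exact (by exact_mod_cast Nat.cast_le.mpr (by omega : 2 ≤ k+2) : (2:ℕ∞) ≤ ((k+2:ℕ):ℕ∞))

lemma medist_zero_of_ne {u v : V} (h : u ≠ v) :
    medist (0 : Multiset (Sym2 V)) u v = ⊤ := by
  have : {n | walkLen (mAdj (0 : Multiset (Sym2 V))) n u v} = ∅ := by
    ext k
    simp only [Set.mem_setOf_eq, Set.mem_empty_iff_false, iff_false]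
    intro hk
    cases k with
    | zero => exact h hk
    | succ k => obtain ⟨w, hw, _⟩ := hk; exact (Multiset.notMem_zero _ hw)
  rw [medist, this]
  simp

end Medist

section Count

lemma sym2_right_inj {V : Type*} (x : V) : Function.Injective (fun y : V => s(x, y)) :=
  fun _ _ h => Sym2.congr_right.mp h

lemma count_edgeMS {n : ℕ} (s : Fin n → Multiset (Fin n)) {u v : Fin n} (h : u ≠ v) :
    (edgeMS s).count s(u, v) = (s u).count v + (s v).count u := by
  rw [edgeMS, Multiset.count_sum']
  have hterm : ∀ w : Fin n, Multiset.count s(u, v) ((s w).map (fun y => s(w, y))) =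
      (if w = u then (s u).count v else 0) + (if w = v then (s v).count u else 0) := by
    intro w
    by_cases hwu : w = u
    · subst hwu
      rw [if_pos rfl, if_neg h, Multiset.count_map_eq_count' _ _ (sym2_right_inj w) v]
      omega
    · by_cases hwv : w = v
      · subst hwv
        rw [if_neg hwu, if_pos rfl, Sym2.eq_swap,
          Multiset.count_map_eq_count' _ _ (sym2_right_inj w) u]
        omega
      · rw [if_neg hwu, if_neg hwv, add_zero, Multiset.count_eq_zero]
        intro hmem
        obtain ⟨y, _, hy⟩ := Multiset.mem_map.mp hmem
        rcases Sym2.eq_iff.mp hy with ⟨rfl, rfl⟩ | ⟨rfl, rfl⟩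
        · exact hwu rfl
        · exact hwv rfl
  rw [Finset.sum_congr rfl (fun w _ => hterm w), Finset.sum_add_distrib]
  simp [Finset.sum_ite_eq']

lemma card_sum_count {V : Type*} [DecidableEq V] [Fintype V] (m : Multiset V) :
    ∑ v : V, m.count v = Multiset.card m := by
  rw [← Multiset.toFinset_sum_count_eq m]
  apply (Finset.sum_subset (Finset.subset_univ _) _).symm
  intro x _ hx
  simp [Multiset.count_eq_zero.mpr (fun h => hx (Multiset.mem_toFinset.mpr h))]

lemma card_finset_sum {ι β : Type*} (s : Finset ι) (f : ι → Multiset β) :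
    Multiset.card (∑ i ∈ s, f i) = ∑ i ∈ s, Multiset.card (f i) := by
  induction s using Finset.cons_induction with
  | empty => simp
  | cons a s ha ih => simp [Finset.sum_cons, ih]

lemma card_edgeMS_sum {n : ℕ} (s : Fin n → Multiset (Fin n)) :
    Multiset.card (edgeMS s) = ∑ w : Fin n, Multiset.card (s w) := by
  rw [edgeMS, card_finset_sum]
  simp

lemma card_edgeMS_eq {n : ℕ} (s : Fin n → Multiset (Fin n))
    (hown : ∀ u : Fin n, u ∉ s u)
    (hdouble : ∀ u v : Fin n, u ≠ v → (edgeMS s).count s(u, v) = 2) :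
    Multiset.card (edgeMS s) = n * (n - 1) := by
  have key : ∀ w v : Fin n, (s w).count v + (s v).count w = if v = w then 0 else 2 := by
    intro w v
    by_cases hvw : v = w
    · subst hvw; simp [Multiset.count_eq_zero.mpr (hown v)]
    · rw [if_neg hvw, ← count_edgeMS s (Ne.symm hvw)]
      exact hdouble w v (Ne.symm hvw)
  have inner : ∀ w : Fin n, (∑ v : Fin n, if v = w then 0 else 2) = 2 * (n - 1) := by
    intro w
    rw [← Finset.sum_erase_add _ _ (Finset.mem_univ w), if_pos rfl, add_zero,
      Finset.sum_congr rfl (fun v hv => if_neg (Finset.ne_of_mem_erase hv)),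
      Finset.sum_const, Finset.card_erase_of_mem (Finset.mem_univ w), Finset.card_univ,
      Fintype.card_fin, smul_eq_mul]
    exact Nat.mul_comm _ _
  have h2 : 2 * Multiset.card (edgeMS s) = 2 * (n * (n - 1)) := by
    rw [card_edgeMS_sum]
    have hswap : (∑ w : Fin n, ∑ v : Fin n, (s v).count w)
        = ∑ w : Fin n, ∑ v : Fin n, (s w).count v := Finset.sum_comm
    calc 2 * ∑ w : Fin n, Multiset.card (s w)
        = (∑ w : Fin n, ∑ v : Fin n, (s w).count v)
          + ∑ w : Fin n, ∑ v : Fin n, (s v).count w := by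
          rw [hswap, two_mul, Finset.sum_congr rfl (fun w _ => (card_sum_count (s w)).symm)]
      _ = ∑ w : Fin n, ∑ v : Fin n, ((s w).count v + (s v).count w) := by
          rw [← Finset.sum_add_distrib]
          exact Finset.sum_congr rfl (fun w _ => by rw [← Finset.sum_add_distrib])
      _ = ∑ w : Fin n, ∑ v : Fin n, (if v = w then 0 else 2) :=
          Finset.sum_congr rfl (fun w _ => Finset.sum_congr rfl (fun v _ => key w v))
      _ = ∑ w : Fin n, 2 * (n - 1) := Finset.sum_congr rfl (fun w _ => inner w)
      _ = 2 * (n * (n - 1)) := by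
          rw [Finset.sum_const, Finset.card_univ, Fintype.card_fin, smul_eq_mul]
          exact mul_left_comm _ _ _
  exact Nat.eq_of_mul_eq_mul_left (by norm_num) h2

end Count

section EvCost

variable {n : ℕ}

/-- Sum of ones over `univ.erase u`. -/
lemma sum_erase_ones (u : Fin n) :
    (∑ _v ∈ Finset.univ.erase u, (1:ℝ≥0∞)) = ((n - 1 : ℕ) : ℝ≥0∞) := by
  rw [Finset.sum_const, Finset.card_erase_of_mem (Finset.mem_univ u), Finset.card_univ,
    Fintype.card_fin, nsmul_eq_mul, mul_one]

lemma sum_medist_ge (m : Multiset (Sym2 (Fin n))) (u : Fin n) :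
    ((n - 1 : ℕ) : ℝ≥0∞) ≤ ∑ v : Fin n, ((medist m u v : ℕ∞) : ℝ≥0∞) := by
  rw [← sum_erase_ones u]
  refine le_trans (Finset.sum_le_sum ?_) (Finset.sum_le_sum_of_subset (Finset.subset_univ _))
  intro v hv
  have h : u ≠ v := fun h => (Finset.ne_of_mem_erase hv) h.symm
  calc (1:ℝ≥0∞) = ((1 : ℕ∞) : ℝ≥0∞) := by simp
    _ ≤ _ := ENat.toENNReal_le.mpr (one_le_medist h)

lemma le_evCost (m : Multiset (Sym2 (Fin n))) (u : Fin n) :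
    ((n - 1 : ℕ) : ℝ≥0∞) ≤ evCost m u := by
  rw [evCost]
  split
  · exact sum_medist_ge m u
  · rename_i hM
    have h1 : (m.map (fun _ => ((n - 1 : ℕ) : ℝ≥0∞))).sum
        ≤ (m.map (fun e => ∑ v : Fin n, ((medist (m.erase e) u v : ℕ∞) : ℝ≥0∞))).sum :=
      Multiset.sum_map_le_sum_map _ _ (fun e _ => sum_medist_ge _ u)
    rw [Multiset.map_const', Multiset.sum_replicate, nsmul_eq_mul] at h1
    calc ((n - 1 : ℕ) : ℝ≥0∞)
        = (Multiset.card m : ℝ≥0∞)⁻¹ * ((Multiset.card m : ℝ≥0∞) * ((n - 1 : ℕ) : ℝ≥0∞)) := by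
          rw [← mul_assoc, ENNReal.inv_mul_cancel (by exact_mod_cast hM)
            (ENNReal.natCast_ne_top _), one_mul]
      _ ≤ _ := mul_le_mul_right h1 _

lemma evCost_base (s : Fin n → Multiset (Fin n)) (u : Fin n) (hn : 2 ≤ n)
    (hdouble : ∀ u v : Fin n, u ≠ v → (edgeMS s).count s(u, v) = 2) :
    evCost (edgeMS s) u = ((n - 1 : ℕ) : ℝ≥0∞) := by
  set m := edgeMS s with hm
  obtain ⟨v0, hv0⟩ := Fintype.exists_ne_of_one_lt_card (by simp [hn] ; omega) u
  have hmem0 : s(u, v0) ∈ m := by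
    rw [← Multiset.count_pos, hdouble u v0 (Ne.symm hv0)]; omega
  have hM : Multiset.card m ≠ 0 := by
    have := Multiset.card_pos_iff_exists_mem.mpr ⟨_, hmem0⟩
    omega
  rw [evCost, if_neg hM]
  have hF : ∀ e ∈ m, (∑ v : Fin n, ((medist (m.erase e) u v : ℕ∞) : ℝ≥0∞))
      = ((n - 1 : ℕ) : ℝ≥0∞) := by
    intro e _
    have hsum : ∀ v : Fin n, ((medist (m.erase e) u v : ℕ∞) : ℝ≥0∞)
        = if v = u then 0 else 1 := by
      intro v
      by_cases hv : v = u
      · subst hv; rw [medist_self]; simp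
      · have hne : u ≠ v := fun h => hv h.symm
        have hmem : s(u, v) ∈ m.erase e := by
          rw [← Multiset.count_pos]
          by_cases hev : s(u, v) = e
          · rw [← hev, Multiset.count_erase_self, hdouble u v hne]; omega
          · rw [Multiset.count_erase_of_ne hev, hdouble u v hne]; omega
        have : medist (m.erase e) u v = 1 :=
          le_antisymm (medist_le_one hmem) (one_le_medist hne)
        rw [this, if_neg hv]; simp
    rw [Finset.sum_congr rfl (fun v _ => hsum v),
      ← Finset.sum_erase_add _ _ (Finset.mem_univ u), if_pos rfl, add_zero,
      Finset.sum_congr rfl (fun v hv => if_neg (Finset.ne_of_mem_erase hv)),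
      sum_erase_ones u]
  rw [Multiset.map_congr rfl hF, Multiset.map_const', Multiset.sum_replicate, nsmul_eq_mul,
    ← mul_assoc, ENNReal.inv_mul_cancel (by exact_mod_cast hM) (ENNReal.natCast_ne_top _),
    one_mul]

lemma sum_map_finset_sum {ι β : Type*} [AddCommMonoid β] (m : Multiset ι) (A : Finset (Fin n))
    (f : ι → Fin n → β) :
    (m.map (fun e => ∑ v ∈ A, f e v)).sum = ∑ v ∈ A, (m.map (fun e => f e v)).sum := by
  induction m using Multiset.induction with
  | empty => simp
  | cons a m ih => simp [Multiset.map_cons, Multiset.sum_cons, ih, Finset.sum_add_distrib]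

/-- Deficiency of the connection from `u` to `v` in multigraph `m`. -/
def defic {n : ℕ} (m : Multiset (Sym2 (Fin n))) (u v : Fin n) : ℕ :=
  if m.count s(u,v) = 0 then 2 else if m.count s(u,v) = 1 then 1 else 0

/-- Indicator that the `u-v` connection is broken after deleting `e` from `m`. -/
noncomputable def dphi {n : ℕ} (m : Multiset (Sym2 (Fin n))) (u v : Fin n)
    (e : Sym2 (Fin n)) : ℝ≥0∞ :=
  if s(u,v) ∈ m.erase e then 0 else 1

end EvCost

/-- The doubled clique `DG_n` (two parallel edges between every pair of agents, no
self-loops, arbitrary ownership) is a pure Nash equilibrium of the adversarial network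
creation game whenever `α ≤ 1/(n(n-1)-1)`. -/
theorem doubledClique_isNE {n : ℕ} (α : ℝ≥0∞) (s : Fin n → Multiset (Fin n))
    (hown : ∀ u : Fin n, u ∉ s u)
    (hdouble : ∀ u v : Fin n, u ≠ v → (edgeMS s).count s(u, v) = 2)
    (hα : α ≤ ((n * (n - 1) - 1 : ℕ) : ℝ≥0∞)⁻¹) :
    IsNE α s := by
  intro u t hut
  rcases Nat.lt_or_ge n 2 with hn | hn
  · -- degenerate case `n ≤ 1` : necessarily `t = s u = 0`.
    have hall : ∀ x : Fin n, x = u := by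
      intro x
      have h1 := x.isLt
      have h2 := u.isLt
      exact Fin.ext (by omega)
    have ht0 : t = 0 :=
      Multiset.eq_zero_of_forall_notMem (fun x hx => hut (hall x ▸ hx))
    have hsu : s u = 0 :=
      Multiset.eq_zero_of_forall_notMem (fun x hx => hown u (hall x ▸ hx))
    have : Function.update s u t = s := by rw [ht0, ← hsu]; exact Function.update_eq_self u s
    rw [this]
  · -- main case `2 ≤ n`
    rw [agentCost, agentCost, Function.update_self,
      evCost_base s u hn hdouble]
    set s' := Function.update s u t with hs'def
    set m' := edgeMS s' with hm'def
    set k := Multiset.card (s u) with hkdef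
    set k' := Multiset.card t with hk'def
    -- goal : α * k + (n-1) ≤ α * k' + evCost m' u
    rcases le_or_gt k k' with hkk | hkk
    · exact add_le_add (mul_le_mul_right (Nat.cast_le.mpr hkk) α) (le_evCost m' u)
    · have hcardm : Multiset.card (edgeMS s) = n * (n - 1) := card_edgeMS_eq s hown hdouble
      have hcards : Multiset.card m' + k = n * (n - 1) + k' := by
        rw [hm'def, card_edgeMS_sum, ← hcardm, card_edgeMS_sum, hs'def,
          Finset.sum_eq_add_sum_sdiff_singleton_of_mem (Finset.mem_univ u)
            (fun w => Multiset.card (Function.update s u t w)),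
          Finset.sum_eq_add_sum_sdiff_singleton_of_mem (Finset.mem_univ u)
            (fun w => Multiset.card (s w)), Function.update_self,
          Finset.sum_congr rfl (fun w hw => by
            rw [Function.update_of_ne
              (Finset.notMem_singleton.mp (Finset.mem_sdiff.mp hw).2)])]
        omega
      obtain ⟨v0, hv0⟩ := Fintype.exists_ne_of_one_lt_card
        (by rw [Fintype.card_fin]; omega) u
      rcases Nat.lt_or_ge (Multiset.card m') 2 with hM2 | hM2
      · -- at most one edge left : infinite expected cost
        have htop : evCost m' u = ⊤ := by
          rcases (by omega : Multiset.card m' = 0 ∨ Multiset.card m' = 1) with h0 | h1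
          · have hm0 : m' = 0 := Multiset.card_eq_zero.mp h0
            rw [evCost, if_pos h0, hm0]
            refine eq_top_iff.mpr (le_trans ?_
              (Finset.single_le_sum (fun i _ => zero_le) (Finset.mem_univ v0)))
            rw [medist_zero_of_ne (Ne.symm hv0)]
            simp
          · obtain ⟨e, he⟩ := Multiset.card_eq_one.mp h1
            rw [evCost, if_neg (by omega), he, Multiset.map_singleton,
              Multiset.sum_singleton, Multiset.erase_singleton, Multiset.card_singleton,
              Nat.cast_one, inv_one, one_mul]
            refine eq_top_iff.mpr (le_trans ?_
              (Finset.single_le_sum (fun i _ => zero_le) (Finset.mem_univ v0)))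
            rw [medist_zero_of_ne (Ne.symm hv0)]
            simp
        rw [htop, add_top]
        exact le_top
      · -- main computation
        have hMle : Multiset.card m' ≤ n * (n - 1) - 1 := by omega
        have hc : ∀ v : Fin n, v ≠ u → m'.count s(u,v) = t.count v + (s v).count u := by
          intro v hv
          rw [hm'def, count_edgeMS s' (Ne.symm hv), hs'def, Function.update_self,
            Function.update_of_ne hv]
        have had : ∀ v : Fin n, v ≠ u → (s u).count v + (s v).count u = 2 := by
          intro v hv
          rw [← count_edgeMS s (Ne.symm hv)]
          exact hdouble u v (Ne.symm hv)
        have hkΔ : k ≤ k' + ∑ v ∈ Finset.univ.erase u, defic m' u v := by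
          have hk1 : k = ∑ v ∈ Finset.univ.erase u, (s u).count v := by
            rw [hkdef, ← card_sum_count (s u), ← Finset.sum_erase_add _ _ (Finset.mem_univ u),
              Multiset.count_eq_zero.mpr (hown u), add_zero]
          have hk2 : k' = ∑ v ∈ Finset.univ.erase u, t.count v := by
            rw [hk'def, ← card_sum_count t, ← Finset.sum_erase_add _ _ (Finset.mem_univ u),
              Multiset.count_eq_zero.mpr hut, add_zero]
          rw [hk1, hk2, ← Finset.sum_add_distrib]
          apply Finset.sum_le_sum
          intro v hv
          have hvne : v ≠ u := Finset.ne_of_mem_erase hv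
          have h1 := hc v hvne
          have h2 := had v hvne
          unfold defic
          split_ifs <;> omega
        have hDS : ((∑ v ∈ Finset.univ.erase u, defic m' u v : ℕ) : ℝ≥0∞)
            ≤ ∑ v ∈ Finset.univ.erase u, (m'.map (dphi m' u v)).sum := by
          rw [Nat.cast_sum]
          apply Finset.sum_le_sum
          intro v hv
          unfold defic
          split_ifs with h0 h1
          · have hall : ∀ e ∈ m', dphi m' u v e = 1 := by
              intro e he
              unfold dphi
              rw [if_neg]
              intro hmem
              have hmem' : s(u,v) ∈ m' := Multiset.mem_of_le (Multiset.erase_le e m') hmem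
              rw [← Multiset.count_pos, h0] at hmem'
              omega
            rw [Multiset.map_congr rfl hall, Multiset.map_const', Multiset.sum_replicate,
              nsmul_eq_mul, mul_one]
            exact_mod_cast Nat.cast_le.mpr hM2
          · have hmem : s(u,v) ∈ m' := by rw [← Multiset.count_pos, h1]; omega
            have hone : dphi m' u v s(u,v) = 1 := by
              unfold dphi
              rw [if_neg]
              intro hmm
              rw [← Multiset.count_pos, Multiset.count_erase_self, h1] at hmm
              omega
            calc ((1:ℕ):ℝ≥0∞) = dphi m' u v s(u,v) := by rw [hone, Nat.cast_one]
              _ ≤ _ := Multiset.single_le_sum (fun x _ => zero_le) _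
                  (Multiset.mem_map_of_mem _ hmem)
          · simp
        have hF : ∀ e ∈ m', ((n - 1:ℕ):ℝ≥0∞) + ∑ v ∈ Finset.univ.erase u, dphi m' u v e
            ≤ ∑ v : Fin n, ((medist (m'.erase e) u v : ℕ∞):ℝ≥0∞) := by
          intro e _
          have hper : ∀ v ∈ Finset.univ.erase u,
              (1:ℝ≥0∞) + dphi m' u v e ≤ ((medist (m'.erase e) u v : ℕ∞):ℝ≥0∞) := by
            intro v hv
            have hvne : u ≠ v := fun h => (Finset.ne_of_mem_erase hv) h.symm
            unfold dphi
            split_ifs with hmem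
            · rw [add_zero]
              calc (1:ℝ≥0∞) = ((1:ℕ∞):ℝ≥0∞) := by simp
                _ ≤ _ := ENat.toENNReal_le.mpr (one_le_medist hvne)
            · calc (1:ℝ≥0∞) + 1 = ((2:ℕ∞):ℝ≥0∞) := by norm_num
                _ ≤ _ := ENat.toENNReal_le.mpr (two_le_medist hvne hmem)
          calc ((n - 1:ℕ):ℝ≥0∞) + ∑ v ∈ Finset.univ.erase u, dphi m' u v e
              = ∑ v ∈ Finset.univ.erase u, (1 + dphi m' u v e) := by
                rw [Finset.sum_add_distrib, sum_erase_ones u]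
            _ ≤ ∑ v ∈ Finset.univ.erase u, ((medist (m'.erase e) u v : ℕ∞):ℝ≥0∞) :=
                Finset.sum_le_sum hper
            _ ≤ _ := Finset.sum_le_sum_of_subset (Finset.subset_univ _)
        have hMne0 : ((Multiset.card m' : ℕ):ℝ≥0∞) ≠ 0 := by
          exact_mod_cast (by omega : Multiset.card m' ≠ 0)
        have hEv : ((n - 1:ℕ):ℝ≥0∞) + ((Multiset.card m' : ℕ):ℝ≥0∞)⁻¹ *
            (∑ v ∈ Finset.univ.erase u, (m'.map (dphi m' u v)).sum) ≤ evCost m' u := by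
          rw [evCost, if_neg (by omega)]
          have h1 : (m'.map (fun e => ((n - 1:ℕ):ℝ≥0∞)
                + ∑ v ∈ Finset.univ.erase u, dphi m' u v e)).sum
              ≤ (m'.map (fun e => ∑ v : Fin n, ((medist (m'.erase e) u v : ℕ∞):ℝ≥0∞))).sum :=
            Multiset.sum_map_le_sum_map _ _ hF
          rw [Multiset.sum_map_add, Multiset.map_const', Multiset.sum_replicate, nsmul_eq_mul,
            sum_map_finset_sum] at h1
          calc ((n - 1:ℕ):ℝ≥0∞) + ((Multiset.card m' : ℕ):ℝ≥0∞)⁻¹ *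
                (∑ v ∈ Finset.univ.erase u, (m'.map (dphi m' u v)).sum)
              = ((Multiset.card m' : ℕ):ℝ≥0∞)⁻¹ *
                (((Multiset.card m' : ℕ):ℝ≥0∞) * ((n - 1:ℕ):ℝ≥0∞)
                  + ∑ v ∈ Finset.univ.erase u, (m'.map (dphi m' u v)).sum) := by
                rw [mul_add, ← mul_assoc,
                  ENNReal.inv_mul_cancel hMne0 (ENNReal.natCast_ne_top _), one_mul]
            _ ≤ _ := mul_le_mul_right h1 _
        have hαM : α ≤ ((Multiset.card m' : ℕ):ℝ≥0∞)⁻¹ :=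
          le_trans hα (ENNReal.inv_le_inv' (Nat.cast_le.mpr hMle))
        have hfinal : α * (k:ℝ≥0∞) ≤ α * (k':ℝ≥0∞) + ((Multiset.card m' : ℕ):ℝ≥0∞)⁻¹ *
            (∑ v ∈ Finset.univ.erase u, (m'.map (dphi m' u v)).sum) := by
          calc α * (k:ℝ≥0∞)
              ≤ α * ((k' + ∑ v ∈ Finset.univ.erase u, defic m' u v : ℕ):ℝ≥0∞) :=
                mul_le_mul_right (Nat.cast_le.mpr hkΔ) α
            _ = α * (k':ℝ≥0∞)
                + α * ((∑ v ∈ Finset.univ.erase u, defic m' u v : ℕ):ℝ≥0∞) := by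
                push_cast
                ring
            _ ≤ _ := add_le_add_right (mul_le_mul' hαM hDS) _
        calc α * (k:ℝ≥0∞) + ((n - 1:ℕ):ℝ≥0∞)
            ≤ (α * (k':ℝ≥0∞) + ((Multiset.card m' : ℕ):ℝ≥0∞)⁻¹ *
                (∑ v ∈ Finset.univ.erase u, (m'.map (dphi m' u v)).sum)) + ((n - 1:ℕ):ℝ≥0∞) :=
              add_le_add_left hfinal _
          _ = α * (k':ℝ≥0∞) + (((n - 1:ℕ):ℝ≥0∞) + ((Multiset.card m' : ℕ):ℝ≥0∞)⁻¹ *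
                (∑ v ∈ Finset.univ.erase u, (m'.map (dphi m' u v)).sum)) := by ring
          _ ≤ α * (k':ℝ≥0∞) + evCost m' u := add_le_add_right hEv _
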